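/- Let D be a block-diagonal matrix with symmetric positive definite blocks D₁, …, D_b (each p×p), let ρ > 0 exceed the largest eigenvalue of every Dᵢ, let Φ = (I + D/ρ)⁻¹, and let P = (1/b)·(J_b ⊗ I_p) where J_b is the b×b all-ones matrix. Then every eigenvalue of the matrix M = (I − P − Φ)(I − 2P) is real. -/

import Mathlib

open Matrix

/-- The averaging projection `P = (1/b)·(J_b ⊗ I_p)` viewed on the index type
`Fin p × Fin b` used by `Matrix.blockDiagonal`. -/
noncomputable def avgProj (p b : ℕ) : Matrix (Fin p × Fin b) (Fin p × Fin b) ℝ :=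
  fun x y => if x.1 = y.1 then (b : ℝ)⁻¹ else 0

section auxlemmas
set_option linter.unusedSectionVars false

lemma myConjT {n : Type*} (A : Matrix n n ℝ) : Aᴴ = Aᵀ := by
  ext i j; simp [conjTranspose_apply]

lemma posDef_conj {n : Type*} [Fintype n] [DecidableEq n]
    {M : Matrix n n ℝ} (hM : M.PosDef) (B : Matrix n n ℝ)
    (hB : IsUnit B.det) : (B * M * Bᵀ).PosDef := by
  have hMt : Mᵀ = M := by rw [← myConjT]; exact hM.1
  refine posDef_iff_dotProduct_mulVec.mpr ⟨?_, ?_⟩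
  · show _ᴴ = _
    rw [myConjT, transpose_mul, transpose_mul, transpose_transpose, hMt, mul_assoc]
  · intro x hx
    have hBt : IsUnit (Bᵀ) := (Matrix.isUnit_iff_isUnit_det _).2 (by rwa [det_transpose])
    have hy : Bᵀ *ᵥ x ≠ 0 := by
      intro h
      exact hx (Matrix.mulVec_injective_iff_isUnit.2 hBt (by simpa using h))
    have e1 : (B * M * Bᵀ) *ᵥ x = B *ᵥ (M *ᵥ (Bᵀ *ᵥ x)) := by
      rw [mulVec_mulVec, mulVec_mulVec]
    have e2 : star x ⬝ᵥ (B * M * Bᵀ) *ᵥ x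
        = star (Bᵀ *ᵥ x) ⬝ᵥ M *ᵥ (Bᵀ *ᵥ x) := by
      rw [e1]
      rw [show (star x : n → ℝ) = x from by simp,
        show (star (Bᵀ *ᵥ x) : n → ℝ) = Bᵀ *ᵥ x from by simp]
      rw [dotProduct_mulVec, ← mulVec_transpose]
    rw [e2]
    exact hM.dotProduct_mulVec_pos hy

lemma posDef_smul {n : Type*} [Fintype n] {M : Matrix n n ℝ} (hM : M.PosDef)
    {c : ℝ} (hc : 0 < c) : (c • M).PosDef := by
  refine posDef_iff_dotProduct_mulVec.mpr ⟨?_, ?_⟩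
  · show _ᴴ = _
    rw [conjTranspose_smul]
    rw [star_trivial, hM.1.eq]
  · intro x hx
    rw [smul_mulVec, dotProduct_smul]
    exact smul_pos hc (hM.dotProduct_mulVec_pos hx)

lemma blockDiag_mulVec {p b : ℕ} (D : Fin b → Matrix (Fin p) (Fin p) ℝ)
    (x : Fin p × Fin b → ℝ) (j : Fin p) (i : Fin b) :
    (blockDiagonal D *ᵥ x) (j, i) = (D i *ᵥ fun j' => x (j', i)) j := by
  simp only [mulVec, dotProduct, blockDiagonal_apply, Fintype.sum_prod_type]
  rw [Finset.sum_comm]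
  simp [eq_comm]

lemma posDef_blockDiagonal {p b : ℕ} {D : Fin b → Matrix (Fin p) (Fin p) ℝ}
    (h : ∀ i, (D i).PosDef) : (blockDiagonal D).PosDef := by
  refine posDef_iff_dotProduct_mulVec.mpr ⟨?_, ?_⟩
  · show _ᴴ = _
    rw [myConjT, blockDiagonal_transpose]
    have : (fun k => (D k)ᵀ) = D := by
      funext i; rw [← myConjT]; exact (h i).1
    rw [this]
  · intro x hx
    have key : star x ⬝ᵥ blockDiagonal D *ᵥ x
        = ∑ i, star (fun j => x (j, i)) ⬝ᵥ (D i *ᵥ fun j => x (j, i)) := by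
      simp only [dotProduct, Fintype.sum_prod_type]
      rw [Finset.sum_comm]
      refine Finset.sum_congr rfl fun i _ => Finset.sum_congr rfl fun j _ => ?_
      rw [blockDiag_mulVec]
      rfl
    rw [key]
    obtain ⟨⟨j0, i0⟩, hji⟩ : ∃ z, x z ≠ 0 := Function.ne_iff.mp hx
    have h1 : ∀ i, 0 ≤ star (fun j => x (j, i)) ⬝ᵥ (D i *ᵥ fun j => x (j, i)) :=
      fun i => (h i).posSemidef.dotProduct_mulVec_nonneg _
    have h2 : 0 < star (fun j => x (j, i0)) ⬝ᵥ (D i0 *ᵥ fun j => x (j, i0)) :=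
      (h i0).dotProduct_mulVec_pos (Function.ne_iff.mpr ⟨j0, hji⟩)
    calc 0 < _ := h2
    _ ≤ _ := Finset.single_le_sum (fun i _ => h1 i) (Finset.mem_univ i0)

lemma posDef_sub_of_spectrum {n : Type*} [Fintype n] [DecidableEq n]
    {A : Matrix n n ℝ} (hA : A.IsHermitian) {ρ : ℝ}
    (h : ∀ x ∈ spectrum ℝ A, x < ρ) : (ρ • (1 : Matrix n n ℝ) - A).PosDef := by
  set U := (hA.eigenvectorUnitary : Matrix n n ℝ) with hUdef
  have hU1 : U * star U = 1 := (Matrix.mem_unitaryGroup_iff).mp hA.eigenvectorUnitary.2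
  have hUd : IsUnit U.det := by
    have := congrArg Matrix.det hU1
    rw [det_mul, det_one] at this
    exact isUnit_iff_exists_inv.mpr ⟨_, this⟩
  have hdiag : diagonal (RCLike.ofReal ∘ hA.eigenvalues) = diagonal hA.eigenvalues := by
    rw [RCLike.ofReal_real_eq_id]; rfl
  have key : ρ • (1 : Matrix n n ℝ) - A
      = U * diagonal (fun i => ρ - hA.eigenvalues i) * Uᵀ := by
    have hst : (star U : Matrix n n ℝ) = Uᵀ := by rw [← myConjT]; rfl
    have hd : diagonal (fun i => ρ - hA.eigenvalues i)
        = ρ • (1 : Matrix n n ℝ) - diagonal hA.eigenvalues := by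
      ext i j
      by_cases hij : i = j <;> simp [diagonal_apply, one_apply, hij]
    rw [hd, ← hst]
    rw [mul_sub, sub_mul]
    rw [show U * (ρ • (1 : Matrix n n ℝ)) * star U = ρ • (1 : Matrix n n ℝ) from by
      rw [mul_smul_comm, mul_one, smul_mul_assoc, hU1]]
    congr 1
    conv_lhs => rw [hA.spectral_theorem, hdiag]
    rw [Unitary.conjStarAlgAut_apply]
  rw [key]
  refine posDef_conj (Matrix.PosDef.diagonal fun i => ?_) U hUd
  have := h _ (hA.eigenvalues_mem_spectrum_real i)
  linarith

section cpx
variable {n : Type*} [Fintype n]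

lemma dot_expand (S : Matrix n n ℝ) (w : n → ℂ) :
    star w ⬝ᵥ (S.map (algebraMap ℝ ℂ)) *ᵥ w
      = ∑ i, ∑ j, (S i j : ℂ) * ((starRingEnd ℂ) (w i) * w j) := by
  simp only [dotProduct, mulVec, map_apply, Finset.mul_sum, Pi.star_apply, RCLike.star_def]
  refine Finset.sum_congr rfl fun i _ => Finset.sum_congr rfl fun j _ => ?_
  simp only [Complex.coe_algebraMap]
  ring

lemma im_dot_eq_zero {S : Matrix n n ℝ} (hS : Sᵀ = S) (w : n → ℂ) :
    (star w ⬝ᵥ (S.map (algebraMap ℝ ℂ)) *ᵥ w).im = 0 := by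
  have expand : ∀ i j, ((S i j : ℂ) * ((starRingEnd ℂ) (w i) * w j)).im
      = S i j * ((starRingEnd ℂ) (w i) * w j).im := fun i j => by
    simp [Complex.mul_im]
  have esum : (∑ i, ∑ j, (S i j : ℂ) * ((starRingEnd ℂ) (w i) * w j)).im
      = ∑ i, ∑ j, S i j * ((starRingEnd ℂ) (w i) * w j).im := by
    rw [Complex.im_sum]
    exact Finset.sum_congr rfl fun i _ => by
      rw [Complex.im_sum]
      exact Finset.sum_congr rfl fun j _ => expand i j
  rw [dot_expand, esum]
  have hsymm : ∀ i j, S j i = S i j := fun i j => by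
    conv_lhs => rw [← hS]
    rfl
  have key : ∑ i, ∑ j, S i j * ((starRingEnd ℂ) (w i) * w j).im
      = - ∑ i, ∑ j, S i j * ((starRingEnd ℂ) (w i) * w j).im := by
    conv_lhs => rw [Finset.sum_comm]
    rw [← Finset.sum_neg_distrib]
    refine Finset.sum_congr rfl fun i _ => ?_
    rw [← Finset.sum_neg_distrib]
    refine Finset.sum_congr rfl fun j _ => ?_
    rw [hsymm i j]
    have h2 : (starRingEnd ℂ) (w j) * w i = (starRingEnd ℂ) ((starRingEnd ℂ) (w i) * w j) := by
      rw [_root_.map_mul, Complex.conj_conj]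
      ring
    rw [h2, Complex.conj_im]
    ring
  linarith [key]

lemma re_dot_pos {S : Matrix n n ℝ} (hS : S.PosDef) {w : n → ℂ} (hw : w ≠ 0) :
    0 < (star w ⬝ᵥ (S.map (algebraMap ℝ ℂ)) *ᵥ w).re := by
  classical
  have expand : ∀ i j, ((S i j : ℂ) * ((starRingEnd ℂ) (w i) * w j)).re
      = S i j * ((starRingEnd ℂ) (w i) * w j).re := fun i j => by
    simp [Complex.mul_re]
  have esum : (∑ i, ∑ j, (S i j : ℂ) * ((starRingEnd ℂ) (w i) * w j)).re
      = ∑ i, ∑ j, S i j * ((starRingEnd ℂ) (w i) * w j).re := by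
    rw [Complex.re_sum]
    exact Finset.sum_congr rfl fun i _ => by
      rw [Complex.re_sum]
      exact Finset.sum_congr rfl fun j _ => expand i j
  rw [dot_expand, esum]
  set u : n → ℝ := fun i => (w i).re with hu
  set v : n → ℝ := fun i => (w i).im with hv
  have hterm : ∀ i j, S i j * ((starRingEnd ℂ) (w i) * w j).re
      = S i j * (u i * u j) + S i j * (v i * v j) := by
    intro i j
    simp only [Complex.mul_re, Complex.conj_re, Complex.conj_im, u, v]
    ring
  have key : ∑ i, ∑ j, S i j * ((starRingEnd ℂ) (w i) * w j).re
      = (star u ⬝ᵥ S *ᵥ u) + (star v ⬝ᵥ S *ᵥ v) := by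
    simp only [hterm, Finset.sum_add_distrib]
    congr 1 <;>
    · simp only [dotProduct, mulVec, Pi.star_apply, star_trivial, Finset.mul_sum]
      refine Finset.sum_congr rfl fun i _ => Finset.sum_congr rfl fun j _ => by ring
  rw [key]
  have huv : u ≠ 0 ∨ v ≠ 0 := by
    by_contra hc
    push_neg at hc
    apply hw
    funext i
    have h1 := congrFun hc.1 i
    have h2 := congrFun hc.2 i
    simp only [u, v, Pi.zero_apply] at h1 h2
    exact Complex.ext h1 h2
  rcases huv with h | h
  · exact add_pos_of_pos_of_nonneg (hS.dotProduct_mulVec_pos h) (hS.posSemidef.dotProduct_mulVec_nonneg v)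
  · exact add_pos_of_nonneg_of_pos (hS.posSemidef.dotProduct_mulVec_nonneg u) (hS.dotProduct_mulVec_pos h)

end cpx

lemma avgProj_mul_self (p b : ℕ) : avgProj p b * avgProj p b = avgProj p b := by
  ext ⟨j, i⟩ ⟨j', i'⟩
  have hb : ((b : ℝ)) ≠ 0 := Nat.cast_ne_zero.mpr i.pos.ne'
  simp only [mul_apply, avgProj, Fintype.sum_prod_type, ite_mul, zero_mul, mul_ite, mul_zero]
  simp
  by_cases h : j = j'
  · simp only [h, if_true, Finset.sum_const, Finset.card_univ, Fintype.card_fin, nsmul_eq_mul]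
    field_simp
  · simp [h]

lemma avgProj_transpose (p b : ℕ) : (avgProj p b)ᵀ = avgProj p b := by
  ext x y
  simp only [transpose_apply, avgProj]
  by_cases h : x.1 = y.1 <;> simp [h, eq_comm]

end auxlemmas

theorem admm_map_real_eigenvalues_large_step {p b : ℕ}
    (D : Fin b → Matrix (Fin p) (Fin p) ℝ) (hD : ∀ i, (D i).PosDef)
    (ρ : ℝ) (hρ : 0 < ρ)
    (hspec : ∀ i, ∀ x ∈ spectrum ℝ (D i), x < ρ) :
    ∀ μ ∈ spectrum ℂ
        ((((1 : Matrix (Fin p × Fin b) (Fin p × Fin b) ℝ) - avgProj p b -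
            (1 + ρ⁻¹ • Matrix.blockDiagonal D)⁻¹) *
          (1 - (2 : ℝ) • avgProj p b)).map (algebraMap ℝ ℂ)),
      μ.im = 0 := by
  classical
  intro μ hμ
  set E : Matrix (Fin p × Fin b) (Fin p × Fin b) ℝ := ρ⁻¹ • Matrix.blockDiagonal D with hEdef
  set Φ : Matrix (Fin p × Fin b) (Fin p × Fin b) ℝ := (1 + E)⁻¹ with hΦdef
  set P : Matrix (Fin p × Fin b) (Fin p × Fin b) ℝ := avgProj p b with hPdef
  set M : Matrix (Fin p × Fin b) (Fin p × Fin b) ℝ := (1 - P - Φ) * (1 - (2 : ℝ) • P) with hMdef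
  have hPP : P * P = P := avgProj_mul_self p b
  have hPt : Pᵀ = P := avgProj_transpose p b
  have hEpd : E.PosDef := posDef_smul (posDef_blockDiagonal hD) (inv_pos.mpr hρ)
  have h1mE : ((1 : Matrix (Fin p × Fin b) (Fin p × Fin b) ℝ) - E).PosDef := by
    have h1 : (1 : Matrix (Fin p × Fin b) (Fin p × Fin b) ℝ) - E
        = ρ⁻¹ • Matrix.blockDiagonal
            (fun i => ρ • (1 : Matrix (Fin p) (Fin p) ℝ) - D i) := by
      have e : (fun i => ρ • (1 : Matrix (Fin p) (Fin p) ℝ) - D i)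
          = (ρ • (1 : Fin b → Matrix (Fin p) (Fin p) ℝ)) - D := rfl
      rw [e, blockDiagonal_sub, blockDiagonal_smul, blockDiagonal_one, smul_sub, smul_smul,
        inv_mul_cancel₀ hρ.ne', one_smul, hEdef]
    rw [h1]
    exact posDef_smul
      (posDef_blockDiagonal fun i => posDef_sub_of_spectrum (hD i).1 (hspec i))
      (inv_pos.mpr hρ)
  have hApd : ((1 : Matrix (Fin p × Fin b) (Fin p × Fin b) ℝ) + E).PosDef :=
    Matrix.PosDef.one.add_posSemidef hEpd.posSemidef
  have hAdet : IsUnit ((1 : Matrix (Fin p × Fin b) (Fin p × Fin b) ℝ) + E).det :=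
    hApd.det_pos.ne'.isUnit
  have hAΦ : ((1 : Matrix (Fin p × Fin b) (Fin p × Fin b) ℝ) + E) * Φ = 1 :=
    mul_nonsing_inv _ hAdet
  have hΦA : Φ * ((1 : Matrix (Fin p × Fin b) (Fin p × Fin b) ℝ) + E) = 1 :=
    nonsing_inv_mul _ hAdet
  have hΦpd : Φ.PosDef := hApd.inv
  have hΦt : Φᵀ = Φ := by rw [← myConjT]; exact hΦpd.1
  have hΦdet : IsUnit Φ.det := hΦpd.det_pos.ne'.isUnit
  set S : Matrix (Fin p × Fin b) (Fin p × Fin b) ℝ := Φ + Φ - 1 with hSdef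
  have hΦE : Φ * E = 1 - Φ := by
    have h0 := hΦA
    rw [mul_add, mul_one] at h0
    exact eq_sub_of_add_eq' h0
  have hSfac : S = Φ * (1 - E * E) * Φᵀ := by
    rw [hΦt]
    have h1 : Φ * (1 - E * E) * Φ
        = Φ * ((1 - E) * (((1 : Matrix (Fin p × Fin b) (Fin p × Fin b) ℝ) + E) * Φ)) := by
      noncomm_ring
    rw [h1, hAΦ, mul_one, mul_sub, mul_one, hΦE, hSdef]
    noncomm_ring
  have h1mE2 : ((1 : Matrix (Fin p × Fin b) (Fin p × Fin b) ℝ) - E * E).PosDef := by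
    obtain ⟨R, hRH, hRR⟩ : ∃ R : Matrix (Fin p × Fin b) (Fin p × Fin b) ℝ,
        Rᴴ = R ∧ R * R = E :=
      open scoped MatrixOrder in
      ⟨CFC.sqrt E, (CFC.sqrt_nonneg E).posSemidef.1,
        CFC.sqrt_mul_sqrt_self E hEpd.posSemidef.nonneg⟩
    have h3 : R * (1 - E) * Rᴴ = E - E * E := by
      rw [hRH, ← hRR]
      noncomm_ring
    have h4 : (1 : Matrix (Fin p × Fin b) (Fin p × Fin b) ℝ) - E * E
        = (1 - E) + R * (1 - E) * Rᴴ := by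
      rw [h3]; noncomm_ring
    rw [h4]
    exact h1mE.add_posSemidef (h1mE.posSemidef.mul_mul_conjTranspose_same R)
  have hSpd : S.PosDef := by
    rw [hSfac]
    exact posDef_conj h1mE2 Φ hΦdet
  have hSt : Sᵀ = S := by
    rw [hSdef, transpose_sub, transpose_add, hΦt, transpose_one]
  have hMt : Mᵀ = (1 - (2 : ℝ) • P) * (1 - P - Φ) := by
    rw [hMdef]
    simp only [transpose_mul, transpose_sub, transpose_smul, transpose_one, hPt, hΦt]
  have hPP2 : ∀ X : Matrix (Fin p × Fin b) (Fin p × Fin b) ℝ, P * (P * X) = P * X :=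
    fun X => by rw [← mul_assoc, hPP]
  have hMS : M * S = S * Mᵀ := by
    rw [hMt, hMdef, hSdef]
    simp only [two_smul]
    simp only [mul_add, add_mul, mul_sub, sub_mul, mul_one, one_mul, mul_assoc, hPP2, hPP]
    abel
  have hMSt : (M * S)ᵀ = M * S := by
    conv_lhs => rw [hMS, transpose_mul, transpose_transpose, hSt]
  -- complex part
  set Mc : Matrix (Fin p × Fin b) (Fin p × Fin b) ℂ := M.map (algebraMap ℝ ℂ) with hMcdef
  set Sc : Matrix (Fin p × Fin b) (Fin p × Fin b) ℂ := S.map (algebraMap ℝ ℂ) with hScdef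
  have hμ' : ¬ IsUnit (algebraMap ℂ (Matrix (Fin p × Fin b) (Fin p × Fin b) ℂ) μ - Mc) :=
    spectrum.mem_iff.mp hμ
  have hdet : (algebraMap ℂ (Matrix (Fin p × Fin b) (Fin p × Fin b) ℂ) μ - Mc).det = 0 := by
    by_contra hne
    exact hμ' ((Matrix.isUnit_iff_isUnit_det _).mpr (Ne.isUnit hne))
  obtain ⟨v, hv0, hv⟩ := (Matrix.exists_mulVec_eq_zero_iff).mpr hdet
  have hMv : Mc *ᵥ v = μ • v := by
    have h0 : (algebraMap ℂ (Matrix (Fin p × Fin b) (Fin p × Fin b) ℂ) μ) *ᵥ v - Mc *ᵥ v = 0 := by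
      rw [← sub_mulVec]; exact hv
    have h1 : (algebraMap ℂ (Matrix (Fin p × Fin b) (Fin p × Fin b) ℂ) μ) *ᵥ v = μ • v := by
      rw [Algebra.algebraMap_eq_smul_one, smul_mulVec, one_mulVec]
    rw [← h1]
    exact (sub_eq_zero.mp h0).symm
  have hScdet : IsUnit Sc.det := by
    have hdet2 : Sc.det = algebraMap ℝ ℂ S.det := by
      rw [hScdef,
        show S.map ⇑(algebraMap ℝ ℂ) = (algebraMap ℝ ℂ).mapMatrix S from rfl,
        ← RingHom.map_det]
    refine Ne.isUnit ?_
    rw [hdet2]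
    simp only [ne_eq, map_eq_zero]
    exact hSpd.det_pos.ne'
  set w : (Fin p × Fin b) → ℂ := Sc⁻¹ *ᵥ v with hwdef
  have hvw : Sc *ᵥ w = v := by
    rw [hwdef, mulVec_mulVec, mul_nonsing_inv _ hScdet, one_mulVec]
  have hw0 : w ≠ 0 := by
    intro h
    apply hv0
    rw [← hvw, h, mulVec_zero]
  have hHw : ((M * S).map (algebraMap ℝ ℂ)) *ᵥ w = μ • v := by
    rw [Matrix.map_mul, ← hMcdef, ← hScdef, ← mulVec_mulVec, hvw, hMv]
  have key : star w ⬝ᵥ ((M * S).map (algebraMap ℝ ℂ)) *ᵥ w = μ * (star w ⬝ᵥ Sc *ᵥ w) := by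
    rw [hHw, hvw, dotProduct_smul, smul_eq_mul]
  have him1 : (star w ⬝ᵥ ((M * S).map (algebraMap ℝ ℂ)) *ᵥ w).im = 0 := im_dot_eq_zero hMSt w
  have him2 : (star w ⬝ᵥ Sc *ᵥ w).im = 0 := im_dot_eq_zero hSt w
  have hre : 0 < (star w ⬝ᵥ Sc *ᵥ w).re := re_dot_pos hSpd hw0
  have hfin := congrArg Complex.im key
  rw [him1, Complex.mul_im, him2, mul_zero, zero_add] at hfin
  have : μ.im * (star w ⬝ᵥ Sc *ᵥ w).re = 0 := hfin.symm
  rcases mul_eq_zero.mp this with h | h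
  · exact h
  · exact absurd h hre.ne'
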